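/- (Kolmogorov–Weierstrass theorem) Assume every f ∈ C([0,1]^d) admits a representation f(x) = Σ_{q=0}^{2d} g_f(Σ_{i=1}^d λ_i φ_q(x_i)) with g_f ∈ C([0,d]), where λ_i ∈ (0,1] and φ_q : [0,1] → [0,1] are continuous (Kolmogorov superposition theorem). Then the linear span of the Kolmogorov monomials Kp_n(x) := Σ_{q=0}^{2d} (Σ_{i=1}^d λ_i φ_q(x_i))^n, n ≥ 0, is dense in C([0,1]^d) with respect to the uniform norm. -/

import Mathlib

/-- Kolmogorov–Weierstrass: assuming the Kolmogorov superposition theorem,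
the span of the Kolmogorov monomials is dense in C([0,1]^d) in the uniform norm. -/
theorem kolmogorov_weierstrass (d : ℕ) (hd : 1 ≤ d)
    (lam : Fin d → ℝ) (hlam : ∀ i, 0 < lam i ∧ lam i ≤ 1)
    (φ : Fin (2*d+1) → ℝ → ℝ)
    (hφc : ∀ q, ContinuousOn (φ q) (Set.Icc (0:ℝ) 1))
    (hφmap : ∀ q, Set.MapsTo (φ q) (Set.Icc (0:ℝ) 1) (Set.Icc (0:ℝ) 1))
    (KST : ∀ f : (Fin d → ℝ) → ℝ, ContinuousOn f (Set.Icc 0 1) →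
      ∃ g : ℝ → ℝ, ContinuousOn g (Set.Icc (0:ℝ) (d:ℝ)) ∧
        ∀ x ∈ Set.Icc (0 : Fin d → ℝ) 1,
          f x = ∑ q : Fin (2*d+1), g (∑ i, lam i * φ q (x i))) :
    ∀ f : (Fin d → ℝ) → ℝ, ContinuousOn f (Set.Icc 0 1) → ∀ ε > (0:ℝ),
      ∃ (N : ℕ) (c : ℕ → ℝ), ∀ x ∈ Set.Icc (0 : Fin d → ℝ) 1,
        |f x - ∑ m ∈ Finset.range N, c m *
          ∑ q : Fin (2*d+1), (∑ i, lam i * φ q (x i)) ^ m| ≤ ε := by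
  intro f hf ε hε
  obtain ⟨g, hg, hrep⟩ := KST f hf
  have hε' : (0:ℝ) < ε / (2*d+1) := by positivity
  obtain ⟨p, hp⟩ := exists_polynomial_near_of_continuousOn 0 (d:ℝ) g hg _ hε'
  refine ⟨p.natDegree + 1, fun m => p.coeff m, ?_⟩
  intro x hx
  -- membership facts
  have hxmem : ∀ i, x i ∈ Set.Icc (0:ℝ) 1 := by
    intro i
    exact ⟨hx.1 i, hx.2 i⟩
  have ht : ∀ q : Fin (2*d+1), (∑ i, lam i * φ q (x i)) ∈ Set.Icc (0:ℝ) (d:ℝ) := by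
    intro q
    have hterm : ∀ i, lam i * φ q (x i) ∈ Set.Icc (0:ℝ) 1 := by
      intro i
      have hφ := hφmap q (hxmem i)
      constructor
      · exact mul_nonneg (hlam i).1.le hφ.1
      · calc lam i * φ q (x i) ≤ 1 * 1 :=
              mul_le_mul (hlam i).2 hφ.2 hφ.1 zero_le_one
          _ = 1 := one_mul 1
    constructor
    · exact Finset.sum_nonneg fun i _ => (hterm i).1
    · calc (∑ i, lam i * φ q (x i)) ≤ ∑ _i : Fin d, (1:ℝ) :=
            Finset.sum_le_sum fun i _ => (hterm i).2
        _ = d := by simp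
  -- rewrite the inner double sum as sum over q of p.eval
  have hswap : (∑ m ∈ Finset.range (p.natDegree + 1), p.coeff m *
      ∑ q : Fin (2*d+1), (∑ i, lam i * φ q (x i)) ^ m)
      = ∑ q : Fin (2*d+1), p.eval (∑ i, lam i * φ q (x i)) := by
    calc (∑ m ∈ Finset.range (p.natDegree + 1), p.coeff m *
          ∑ q : Fin (2*d+1), (∑ i, lam i * φ q (x i)) ^ m)
        = ∑ m ∈ Finset.range (p.natDegree + 1), ∑ q : Fin (2*d+1),
            p.coeff m * (∑ i, lam i * φ q (x i)) ^ m := by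
          simp [Finset.mul_sum]
      _ = ∑ q : Fin (2*d+1), ∑ m ∈ Finset.range (p.natDegree + 1),
            p.coeff m * (∑ i, lam i * φ q (x i)) ^ m := Finset.sum_comm
      _ = ∑ q : Fin (2*d+1), p.eval (∑ i, lam i * φ q (x i)) := by
          refine Finset.sum_congr rfl fun q _ => ?_
          rw [Polynomial.eval_eq_sum_range]
  rw [hswap, hrep x hx, ← Finset.sum_sub_distrib]
  calc |∑ q : Fin (2*d+1), (g (∑ i, lam i * φ q (x i))
          - p.eval (∑ i, lam i * φ q (x i)))|
      ≤ ∑ q : Fin (2*d+1), |g (∑ i, lam i * φ q (x i))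
          - p.eval (∑ i, lam i * φ q (x i))| := Finset.abs_sum_le_sum_abs _ _
    _ ≤ ∑ _q : Fin (2*d+1), ε / (2*d+1) := by
        refine Finset.sum_le_sum fun q _ => ?_
        rw [abs_sub_comm]
        exact (hp _ (ht q)).le
    _ = ε := by
        rw [Finset.sum_const, Finset.card_univ, Fintype.card_fin, nsmul_eq_mul]
        field_simp
        norm_num
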